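/- Let V be a vector space of dimension n = r + s over a field with r ≥ s ≥ 0, with basis e_1, …, e_n, and let u be the linear endomorphism defined by u(e_i) = 0 for 1 ≤ i ≤ r and u(e_i) = e_{i−r} for r+1 ≤ i ≤ n. Then the space of linear endomorphisms of V commuting with u has dimension r² + s². -/

import Mathlib

open Module

namespace Stmt1Aux

variable {K : Type*} [Field K] {r s : ℕ}

def mk0 (hrs : s ≤ r) (p : Matrix (Fin r) (Fin r) K × Matrix (Fin s) (Fin s) K) :
    Matrix (Fin (r + s)) (Fin (r + s)) K :=
  Matrix.of fun i j =>
    if hi : i.val < r then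
      if hj : j.val < r then
        if hjs : j.val < s then
          if his : i.val < s then p.2 ⟨i.val, his⟩ ⟨j.val, hjs⟩ else 0
        else p.1 ⟨i.val, hi⟩ ⟨j.val, hj⟩
      else p.1 ⟨i.val, hi⟩ ⟨j.val - r, by have := j.isLt; omega⟩
    else
      if hj : r ≤ j.val then
        p.2 ⟨i.val - r, by have := i.isLt; omega⟩ ⟨j.val - r, by have := j.isLt; omega⟩
      else 0

def mkL (hrs : s ≤ r) : (Matrix (Fin r) (Fin r) K × Matrix (Fin s) (Fin s) K) →ₗ[K]
    Matrix (Fin (r + s)) (Fin (r + s)) K where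
  toFun := mk0 hrs
  map_add' p q := by
    ext i j
    simp only [mk0, Matrix.of_apply, Matrix.add_apply, Prod.fst_add, Prod.snd_add]
    split_ifs <;> simp
  map_smul' c p := by
    ext i j
    simp only [mk0, Matrix.of_apply, Matrix.smul_apply, Prod.smul_fst, Prod.smul_snd,
      RingHom.id_apply]
    split_ifs <;> simp

def Umat (K : Type*) [Field K] (r s : ℕ) : Matrix (Fin (r + s)) (Fin (r + s)) K :=
  Matrix.of fun i k => if k.val = i.val + r then (1 : K) else 0

lemma Umat_mul (A : Matrix (Fin (r + s)) (Fin (r + s)) K) (i j : Fin (r + s)) :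
    (Umat K r s * A) i j = if h : i.val + r < r + s then A ⟨i.val + r, h⟩ j else 0 := by
  rw [Matrix.mul_apply]
  split
  · next h =>
    rw [Finset.sum_eq_single (⟨i.val + r, h⟩ : Fin (r + s))]
    · simp [Umat]
    · intro k _ hk
      have : k.val ≠ i.val + r := fun hc => hk (Fin.ext hc)
      simp [Umat, this]
    · simp
  · next h =>
    apply Finset.sum_eq_zero
    intro k _
    have : k.val ≠ i.val + r := by have := k.isLt; omega
    simp [Umat, this]

lemma mul_Umat (A : Matrix (Fin (r + s)) (Fin (r + s)) K) (i j : Fin (r + s)) :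
    (A * Umat K r s) i j = if h : r ≤ j.val then
      A i ⟨j.val - r, Nat.lt_of_le_of_lt (Nat.sub_le _ _) j.isLt⟩ else 0 := by
  rw [Matrix.mul_apply]
  split
  · next h =>
    rw [Finset.sum_eq_single (⟨j.val - r, Nat.lt_of_le_of_lt (Nat.sub_le _ _) j.isLt⟩ : Fin (r + s))]
    · have hv : j.val = (j.val - r) + r := by omega
      simp [Umat, ← hv]
    · intro k _ hk
      have : j.val ≠ k.val + r := by
        intro hc
        exact hk (Fin.ext (show k.val = j.val - r by omega))
      simp [Umat, this]
    · simp
  · next h =>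
    apply Finset.sum_eq_zero
    intro k _
    have : j.val ≠ k.val + r := by omega
    simp [Umat, this]

lemma mk0_comm (hrs : s ≤ r) (p : Matrix (Fin r) (Fin r) K × Matrix (Fin s) (Fin s) K) :
    Umat K r s * mk0 hrs p = mk0 hrs p * Umat K r s := by
  ext i j
  rw [Umat_mul, mul_Umat]
  simp only [mk0, Matrix.of_apply]
  split_ifs <;> try rfl
  all_goals try omega
  all_goals simp only [Nat.add_sub_cancel]


lemma mkL_inj (hrs : s ≤ r) :
    Function.Injective (mkL (K := K) hrs) := by
  rw [injective_iff_map_eq_zero]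
  intro p hp
  have hp' : ∀ i j, mk0 hrs p i j = 0 := fun i j => congrFun (congrFun hp i) j
  ext1
  · ext i j
    by_cases hjs : j.val < s
    · have := hp' ⟨i.val, by have := i.isLt; omega⟩ ⟨j.val + r, by have := j.isLt; omega⟩
      simpa [mk0, i.isLt, show ¬ (j.val + r < r) by omega, show r ≤ j.val + r by omega,
        Nat.add_sub_cancel] using this
    · have := hp' ⟨i.val, by have := i.isLt; omega⟩ ⟨j.val, by have := j.isLt; omega⟩
      simpa [mk0, i.isLt, j.isLt, hjs] using this
  · ext i j
    have := hp' ⟨i.val, by have := i.isLt; omega⟩ ⟨j.val, by have := j.isLt; omega⟩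
    simpa [mk0, show i.val < r by have := i.isLt; omega, show j.val < r by have := j.isLt; omega,
      j.isLt, i.isLt] using this

omit [Field K] in
lemma Acongr {n : ℕ} (A : Matrix (Fin n) (Fin n) K) {a b a' b' : Fin n}
    (h1 : a.val = a'.val) (h2 : b.val = b'.val) : A a b = A a' b' := by
  rw [Fin.ext h1, Fin.ext h2]

lemma mk0_surj (hrs : s ≤ r) (A : Matrix (Fin (r + s)) (Fin (r + s)) K)
    (hA : Umat K r s * A = A * Umat K r s) : ∃ p, mk0 (K := K) hrs p = A := by
  have R : ∀ i j : Fin (r + s),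
      (if h : i.val + r < r + s then A ⟨i.val + r, h⟩ j else 0) =
      (if h : r ≤ j.val then A i ⟨j.val - r, Nat.lt_of_le_of_lt (Nat.sub_le _ _) j.isLt⟩ else 0) := by
    intro i j
    rw [← Umat_mul, ← mul_Umat, hA]
  refine ⟨(Matrix.of fun i k =>
      if h : k.val < s then A ⟨i.val, by have := i.isLt; omega⟩ ⟨k.val + r, by omega⟩
      else A ⟨i.val, by have := i.isLt; omega⟩ ⟨k.val, by have := k.isLt; omega⟩,
    Matrix.of fun i k => A ⟨i.val, by have := i.isLt; omega⟩ ⟨k.val, by have := k.isLt; omega⟩), ?_⟩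
  ext i j
  simp only [mk0, Matrix.of_apply, Fin.val_mk]
  split_ifs with h1 h2 h3 h4 h5 h6
  · exact Acongr A rfl rfl
  · -- i < r, j < r, j < s, ¬ i < s : 0 = A i j
    have this2 := R i ⟨j.val + r, by have := j.isLt; omega⟩
    simp only [Fin.val_mk] at this2
    rw [dif_neg (show ¬ (i.val + r < r + s) by omega),
      dif_pos (show r ≤ j.val + r by omega)] at this2
    exact this2.trans (Acongr A rfl (show j.val + r - r = j.val by omega))
  · exact Acongr A rfl rfl
  · exact Acongr A rfl (show j.val - r + r = j.val by omega)
  · exfalso; have := j.isLt; omega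
  · -- ¬ i < r, r ≤ j
    have this2 := R ⟨i.val - r, Nat.lt_of_le_of_lt (Nat.sub_le _ _) i.isLt⟩ j
    simp only [Fin.val_mk] at this2
    rw [dif_pos (show i.val - r + r < r + s by have := i.isLt; omega), dif_pos h6] at this2
    exact this2.symm.trans (Acongr A (show i.val - r + r = i.val by omega) rfl)
  · -- ¬ i < r, ¬ r ≤ j : 0 = A i j
    have this2 := R ⟨i.val - r, Nat.lt_of_le_of_lt (Nat.sub_le _ _) i.isLt⟩ j
    simp only [Fin.val_mk] at this2
    rw [dif_pos (show i.val - r + r < r + s by have := i.isLt; omega), dif_neg h6] at this2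
    exact this2.symm.trans (Acongr A (show i.val - r + r = i.val by omega) rfl)

end Stmt1Aux

open Stmt1Aux

/-- for the nilpotent endomorphism `u` of `K^(r+s)` with `u(e_i) = 0` for
`i ≤ r` and `u(e_i) = e_{i-r}` for `i > r` (0-indexed: `u(e_j) = 0` for `j < r` and
`u(e_j) = e_{j-r}` for `j ≥ r`), the space of endomorphisms commuting with `u`
has dimension `r² + s²`. -/
theorem stmt1 (K : Type*) [Field K] (r s : ℕ) (hrs : s ≤ r)
    (u : Module.End K (Fin (r + s) → K))
    (hu : ∀ j : Fin (r + s), u (Pi.single j 1) =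
      if h : r ≤ j.val then Pi.single (⟨j.val - r, by have := j.isLt; omega⟩ : Fin (r + s)) 1
      else 0) :
    finrank K ↥(LinearMap.ker (LinearMap.mulLeft K u - LinearMap.mulRight K u))
      = r ^ 2 + s ^ 2 := by
  classical
  have hU : LinearMap.toMatrix' u = Umat K r s := by
    ext i j
    rw [LinearMap.toMatrix'_apply]
    have hsingle : (fun j' : Fin (r + s) => if j' = j then (1 : K) else 0) = Pi.single j 1 := by
      funext j'
      simp [Pi.single_apply]
    rw [hu j]
    rcases le_or_gt r j.val with h | h
    · rw [dif_pos h]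
      simp only [Umat, Matrix.of_apply, Pi.single_apply, Fin.ext_iff, Fin.val_mk]
      split_ifs <;> first | rfl | (exfalso; omega)
    · rw [dif_neg (by omega)]
      simp only [Umat, Matrix.of_apply, Pi.zero_apply]
      rw [if_neg (by omega)]
  have hmem : ∀ g : Module.End K (Fin (r + s) → K),
      g ∈ LinearMap.ker (LinearMap.mulLeft K u - LinearMap.mulRight K u) ↔
        Umat K r s * LinearMap.toMatrix' g = LinearMap.toMatrix' g * Umat K r s := by
    intro g
    rw [LinearMap.mem_ker, LinearMap.sub_apply, LinearMap.mulLeft_apply, LinearMap.mulRight_apply,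
      sub_eq_zero]
    constructor
    · intro h
      rw [← hU, ← LinearMap.toMatrix'_mul, ← LinearMap.toMatrix'_mul, h]
    · intro h
      apply LinearMap.toMatrix'.injective
      rw [LinearMap.toMatrix'_mul, LinearMap.toMatrix'_mul, hU, h]
  have key : LinearMap.ker (LinearMap.mulLeft K u - LinearMap.mulRight K u) =
      Submodule.map
        ((LinearMap.toMatrix'.symm :
            Matrix (Fin (r + s)) (Fin (r + s)) K ≃ₗ[K] Module.End K (Fin (r + s) → K)) :
          Matrix (Fin (r + s)) (Fin (r + s)) K →ₗ[K] Module.End K (Fin (r + s) → K))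
        (LinearMap.range (mkL (K := K) hrs)) := by
    ext g
    rw [Submodule.mem_map_equiv, hmem g]
    simp only [LinearEquiv.symm_symm]
    constructor
    · intro h
      exact mk0_surj hrs _ h
    · rintro ⟨p, hp⟩
      rw [← hp]
      exact mk0_comm hrs p
  rw [key, LinearEquiv.finrank_map_eq, LinearMap.finrank_range_of_inj (mkL_inj hrs)]
  simp only [Module.finrank_prod, Module.finrank_matrix, Fintype.card_fin, Module.finrank_self,
    mul_one]
  ring
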